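/- Let (Ω, F, P) be a probability space and fix constants p > 1 and κ > 0. For each n, let Q_n = X_n·P be a probability measure on (Ω, F) with nonnegative F-measurable density X_n satisfying E_P[X_n^p] ≤ κ. Suppose Q is a probability measure on (Ω, F) such that the total variation distance d(Q_n, Q) tends to 0 as n → ∞. Then Q is absolutely continuous with respect to P, and its density X satisfies E_P[X^p] ≤ κ. -/

import Mathlib

open MeasureTheory Filter
open scoped ENNReal

/-- Total variation distance `d(μ,ν) = 2 ⨆_{A measurable} |μ(A) − ν(A)|`. -/
noncomputable def tvDist {Ω : Type*} [MeasurableSpace Ω] (μ ν : Measure Ω) : ℝ :=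
  2 * ⨆ A : {s : Set Ω // MeasurableSet s}, |(μ A.1).toReal - (ν A.1).toReal|

/-- If each `Q n` has a density `X n` w.r.t. `P` with `E_P[(X n)^p] ≤ κ` and
`Q n → Q` in total variation, then `Q ≪ P` and its density satisfies the same bound. -/
theorem limit_density_bound {Ω : Type*} [MeasurableSpace Ω]
    (P : Measure Ω) [IsProbabilityMeasure P]
    (p κ : ℝ) (hp : 1 < p) (hκ : 0 < κ)
    (Q : ℕ → Measure Ω) (X : ℕ → Ω → ℝ≥0∞)
    (hQprob : ∀ n, IsProbabilityMeasure (Q n))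
    (hXmeas : ∀ n, Measurable (X n))
    (hdens : ∀ n, Q n = P.withDensity (X n))
    (hXp : ∀ n, ∫⁻ ω, (X n ω) ^ p ∂P ≤ ENNReal.ofReal κ)
    (Qlim : Measure Ω) [IsProbabilityMeasure Qlim]
    (hconv : Tendsto (fun n => tvDist (Q n) Qlim) atTop (nhds 0)) :
    Qlim ≪ P ∧ ∫⁻ ω, (Qlim.rnDeriv P ω) ^ p ∂P ≤ ENNReal.ofReal κ := by
  classical
  -- a single measurable set's discrepancy is bounded by the tvDist
  have hsup : ∀ n (A : Set Ω), MeasurableSet A →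
      2 * |((Q n) A).toReal - (Qlim A).toReal| ≤ tvDist (Q n) Qlim := by
    intro n A hA
    have hb : BddAbove (Set.range fun B : {s : Set Ω // MeasurableSet s} =>
        |((Q n) B.1).toReal - (Qlim B.1).toReal|) := by
      refine ⟨2, ?_⟩
      rintro x ⟨B, rfl⟩
      have h1 : ((Q n) B.1) ≤ 1 := prob_le_one
      have h2 : (Qlim B.1) ≤ 1 := prob_le_one
      have h1' : ((Q n) B.1).toReal ≤ 1 := by
        simpa using ENNReal.toReal_mono ENNReal.one_ne_top h1
      have h2' : (Qlim B.1).toReal ≤ 1 := by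
        simpa using ENNReal.toReal_mono ENNReal.one_ne_top h2
      have h1'' : (0:ℝ) ≤ ((Q n) B.1).toReal := ENNReal.toReal_nonneg
      have h2'' : (0:ℝ) ≤ (Qlim B.1).toReal := ENNReal.toReal_nonneg
      rw [abs_sub_le_iff]
      constructor <;> linarith
    have := le_ciSup hb (⟨A, hA⟩ : {s : Set Ω // MeasurableSet s})
    unfold tvDist
    linarith
  -- absolute continuity
  have hac : Qlim ≪ P := by
    refine Measure.AbsolutelyContinuous.mk (fun A hA hPA => ?_)
    have h0 : ∀ n, (Q n) A = 0 := fun n => by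
      rw [hdens n, withDensity_apply _ hA, setLIntegral_measure_zero _ _ hPA]
    have hle : ∀ n, 2 * (Qlim A).toReal ≤ tvDist (Q n) Qlim := by
      intro n
      have h := hsup n A hA
      rwa [h0 n, ENNReal.toReal_zero, zero_sub, abs_neg,
        abs_of_nonneg ENNReal.toReal_nonneg] at h
    have hle0 : 2 * (Qlim A).toReal ≤ 0 := ge_of_tendsto' hconv hle
    have : (Qlim A).toReal = 0 := le_antisymm (by linarith) ENNReal.toReal_nonneg
    rcases ENNReal.toReal_eq_zero_iff _ |>.mp this with h | h
    · exact h
    · exact absurd h (measure_ne_top _ _)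
  refine ⟨hac, ?_⟩
  set g := Qlim.rnDeriv P with hgdef
  have hgmeas : Measurable g := Measure.measurable_rnDeriv _ _
  have hQlim_eq : ∀ (A : Set Ω), MeasurableSet A → Qlim A = ∫⁻ ω in A, g ω ∂P := by
    intro A hA
    conv_lhs => rw [← Measure.withDensity_rnDeriv_eq Qlim P hac]
    rw [withDensity_apply _ hA]
  -- the one-sided L¹ differences are controlled by tvDist
  have hbound : ∀ n, (∫⁻ ω, (X n ω - g ω) ∂P) + (∫⁻ ω, (g ω - X n ω) ∂P)
      ≤ ENNReal.ofReal (tvDist (Q n) Qlim) := by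
    intro n
    set A := {ω | g ω ≤ X n ω} with hAdef
    have hA : MeasurableSet A := measurableSet_le hgmeas (hXmeas n)
    have h1 : ∫⁻ ω, (X n ω - g ω) ∂P = ∫⁻ ω in A, (X n ω - g ω) ∂P := by
      rw [← lintegral_add_compl (fun ω => X n ω - g ω) hA]
      have hz : ∫⁻ ω in Aᶜ, (X n ω - g ω) ∂P = 0 := by
        rw [setLIntegral_congr_fun hA.compl
          (fun ω (hω : ω ∈ Aᶜ) =>
            tsub_eq_zero_of_le (le_of_lt (not_le.mp (hω : ¬ (g ω ≤ X n ω)))))]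
        simp
      rw [hz, add_zero]
    have h2 : ∫⁻ ω, (g ω - X n ω) ∂P = ∫⁻ ω in Aᶜ, (g ω - X n ω) ∂P := by
      rw [← lintegral_add_compl (fun ω => g ω - X n ω) hA]
      have hz : ∫⁻ ω in A, (g ω - X n ω) ∂P = 0 := by
        rw [setLIntegral_congr_fun hA
          (fun ω (hω : ω ∈ A) => tsub_eq_zero_of_le hω)]
        simp
      rw [hz, zero_add]
    have keyA : (Q n) A = Qlim A + ∫⁻ ω in A, (X n ω - g ω) ∂P := by
      rw [hdens n, withDensity_apply _ hA, hQlim_eq A hA,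
        ← lintegral_add_left hgmeas]
      refine setLIntegral_congr_fun hA (fun ω (hω : ω ∈ A) => ?_)
      exact (add_tsub_cancel_of_le (hω : g ω ≤ X n ω)).symm
    have keyAc : Qlim Aᶜ = (Q n) Aᶜ + ∫⁻ ω in Aᶜ, (g ω - X n ω) ∂P := by
      rw [hdens n, withDensity_apply _ hA.compl, hQlim_eq Aᶜ hA.compl,
        ← lintegral_add_left (hXmeas n)]
      refine setLIntegral_congr_fun hA.compl (fun ω (hω : ω ∈ Aᶜ) => ?_)
      have hω' : X n ω ≤ g ω := le_of_lt (not_le.mp (hω : ¬ (g ω ≤ X n ω)))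
      exact (add_tsub_cancel_of_le hω').symm
    set a := ∫⁻ ω in A, (X n ω - g ω) ∂P with hadef
    set b := ∫⁻ ω in Aᶜ, (g ω - X n ω) ∂P with hbdef
    have ha_fin : a ≠ ⊤ := by
      have : a ≤ (Q n) A := keyA ▸ self_le_add_left _ _
      exact (this.trans_lt (measure_lt_top _ _)).ne
    have hb_fin : b ≠ ⊤ := by
      have : b ≤ Qlim Aᶜ := keyAc ▸ self_le_add_left _ _
      exact (this.trans_lt (measure_lt_top _ _)).ne
    have haR : a.toReal = ((Q n) A).toReal - (Qlim A).toReal := by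
      rw [keyA, ENNReal.toReal_add (measure_ne_top _ _) ha_fin]; ring
    have hbR : b.toReal = (Qlim Aᶜ).toReal - ((Q n) Aᶜ).toReal := by
      rw [keyAc, ENNReal.toReal_add (measure_ne_top _ _) hb_fin]; ring
    have ha2 : 2 * a.toReal ≤ tvDist (Q n) Qlim := by
      have := hsup n A hA
      have habs : a.toReal ≤ |((Q n) A).toReal - (Qlim A).toReal| :=
        haR ▸ le_abs_self _
      linarith
    have hb2 : 2 * b.toReal ≤ tvDist (Q n) Qlim := by
      have := hsup n Aᶜ hA.compl
      have habs : b.toReal ≤ |((Q n) Aᶜ).toReal - (Qlim Aᶜ).toReal| := by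
        rw [abs_sub_comm]; exact hbR ▸ le_abs_self _
      linarith
    have hab : (a + b).toReal ≤ tvDist (Q n) Qlim := by
      rw [ENNReal.toReal_add ha_fin hb_fin]; linarith
    rw [h1, h2]
    calc a + b
        = ENNReal.ofReal ((a + b).toReal) :=
          (ENNReal.ofReal_toReal (ENNReal.add_ne_top.mpr ⟨ha_fin, hb_fin⟩)).symm
      _ ≤ ENNReal.ofReal (tvDist (Q n) Qlim) := ENNReal.ofReal_le_ofReal hab
  -- choose a subsequence along which tvDist is summable
  have hφex : ∀ k : ℕ, ∃ n, tvDist (Q n) Qlim < (1/2 : ℝ)^k := by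
    intro k
    have hpos : (0:ℝ) < (1/2)^k := by positivity
    obtain ⟨N, hN⟩ := (Metric.tendsto_atTop.mp hconv) _ hpos
    refine ⟨N, ?_⟩
    have := hN N le_rfl
    rw [Real.dist_eq, sub_zero] at this
    exact lt_of_le_of_lt (le_abs_self _) this
  set φ : ℕ → ℕ := fun k => (hφex k).choose with hφdef
  have hφ : ∀ k, tvDist (Q (φ k)) Qlim < (1/2:ℝ)^k := fun k => (hφex k).choose_spec
  set d : ℕ → Ω → ℝ≥0∞ := fun k ω => (X (φ k) ω - g ω) + (g ω - X (φ k) ω) with hddef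
  have hdmeas : ∀ k, Measurable (d k) :=
    fun k => ((hXmeas (φ k)).sub hgmeas).add (hgmeas.sub (hXmeas (φ k)))
  have hsum_fin : (∑' k, ∫⁻ ω, d k ω ∂P) ≠ ⊤ := by
    have hle : (∑' k, ∫⁻ ω, d k ω ∂P) ≤ ∑' k : ℕ, ENNReal.ofReal ((1/2:ℝ)^k) := by
      refine ENNReal.tsum_le_tsum fun k => ?_
      have hsplit : ∫⁻ ω, d k ω ∂P
          = (∫⁻ ω, (X (φ k) ω - g ω) ∂P) + (∫⁻ ω, (g ω - X (φ k) ω) ∂P) :=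
        lintegral_add_left ((hXmeas (φ k)).sub hgmeas) _
      rw [hsplit]
      exact (hbound (φ k)).trans (ENNReal.ofReal_le_ofReal (hφ k).le)
    have hgeo : (∑' k : ℕ, ENNReal.ofReal ((1/2:ℝ)^k)) ≠ ⊤ := by
      have heq : ∀ k : ℕ, ENNReal.ofReal ((1/2:ℝ)^k) = (ENNReal.ofReal (1/2))^k :=
        fun k => ENNReal.ofReal_pow (by norm_num) k
      rw [tsum_congr heq, ENNReal.tsum_geometric]
      refine ENNReal.inv_ne_top.mpr ?_
      simp only [ne_eq, tsub_eq_zero_iff_le, not_le]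
      exact ENNReal.ofReal_lt_one.mpr (by norm_num)
    exact (hle.trans_lt hgeo.lt_top).ne
  have hint_fin : ∫⁻ ω, (∑' k, d k ω) ∂P ≠ ⊤ := by
    rw [lintegral_tsum fun k => (hdmeas k).aemeasurable]
    exact hsum_fin
  have hae1 : ∀ᵐ ω ∂P, (∑' k, d k ω) < ⊤ :=
    ae_lt_top (by exact Measurable.ennreal_tsum hdmeas) hint_fin
  have hae2 : ∀ᵐ ω ∂P, g ω < ⊤ := by
    refine ae_lt_top hgmeas ?_
    have : ∫⁻ ω, g ω ∂P = Qlim Set.univ := by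
      rw [hQlim_eq Set.univ MeasurableSet.univ, setLIntegral_univ]
    rw [this, measure_univ]
    exact ENNReal.one_ne_top
  -- pointwise convergence along the subsequence, a.e.
  have haelim : ∀ᵐ ω ∂P, Tendsto (fun k => (X (φ k) ω) ^ p) atTop (nhds (g ω ^ p)) := by
    filter_upwards [hae1, hae2] with ω h1 h2
    have hd0 : Tendsto (fun k => d k ω) atTop (nhds 0) :=
      ENNReal.tendsto_atTop_zero_of_tsum_ne_top h1.ne
    have hX : Tendsto (fun k => X (φ k) ω) atTop (nhds (g ω)) := by
      rw [ENNReal.tendsto_nhds h2.ne]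
      intro ε hε
      filter_upwards [hd0.eventually_le_const hε] with k hk
      have hk1 : X (φ k) ω - g ω ≤ ε := le_trans le_self_add hk
      have hk2 : g ω - X (φ k) ω ≤ ε := le_trans le_add_self hk
      constructor
      · refine tsub_le_iff_left.mpr ?_
        rw [add_comm]
        exact tsub_le_iff_left.mp hk2
      · exact tsub_le_iff_left.mp hk1
    exact (ENNReal.continuous_rpow_const.tendsto _).comp hX
  -- conclude with Fatou's lemma
  calc ∫⁻ ω, g ω ^ p ∂P
      = ∫⁻ ω, liminf (fun k => (X (φ k) ω) ^ p) atTop ∂P := by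
        refine lintegral_congr_ae ?_
        filter_upwards [haelim] with ω hω
        exact hω.liminf_eq.symm
    _ ≤ liminf (fun k => ∫⁻ ω, (X (φ k) ω) ^ p ∂P) atTop := by
        refine lintegral_liminf_le fun k => ?_
        exact ENNReal.continuous_rpow_const.measurable.comp (hXmeas (φ k))
    _ ≤ ENNReal.ofReal κ := by
        refine liminf_le_of_le (by isBoundedDefault) ?_
        intro b hb
        obtain ⟨k, hk⟩ := hb.exists
        exact hk.trans (hXp (φ k))
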